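/- Let k₁, k₂, γ be real numbers with γ > 0, and let ξ₁, ξ₂, d : ℝ → ℝ be functions such that for every t: ξ₁ has derivative ξ₂(t) at t, ξ₂ has derivative −(1 + k₁k₂)·ξ₁(t) − (k₁ + k₂)·ξ₂(t) + d(t) at t, and d has derivative −γ·(k₁·ξ₁(t) + ξ₂(t)) at t. Define V(t) = ½·ξ₁(t)² + ½·(ξ₂(t) + k₁·ξ₁(t))² + (1/(2γ))·d(t)². Then for every t, V has derivative −k₁·ξ₁(t)² − k₂·(ξ₂(t) + k₁·ξ₁(t))² at t; in particular, if k₁ ≥ 0 and k₂ ≥ 0, the derivative of V is everywhere nonpositive. -/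

import Mathlib

theorem lyapunov_derivative_inner_loop
    (k₁ k₂ γ : ℝ) (hγ : 0 < γ)
    (ξ₁ ξ₂ d : ℝ → ℝ)
    (hξ₁ : ∀ t, HasDerivAt ξ₁ (ξ₂ t) t)
    (hξ₂ : ∀ t, HasDerivAt ξ₂ (-(1 + k₁ * k₂) * ξ₁ t - (k₁ + k₂) * ξ₂ t + d t) t)
    (hd : ∀ t, HasDerivAt d (-γ * (k₁ * ξ₁ t + ξ₂ t)) t)
    (V : ℝ → ℝ)
    (hV : V = fun t => (1/2) * (ξ₁ t)^2 + (1/2) * (ξ₂ t + k₁ * ξ₁ t)^2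
                + (1/(2*γ)) * (d t)^2) :
    ∀ t, HasDerivAt V (-k₁ * (ξ₁ t)^2 - k₂ * (ξ₂ t + k₁ * ξ₁ t)^2) t ∧
      (0 ≤ k₁ → 0 ≤ k₂ → -k₁ * (ξ₁ t)^2 - k₂ * (ξ₂ t + k₁ * ξ₁ t)^2 ≤ 0) := by
  intro t
  constructor
  · have h1 := hξ₁ t
    have h2 := hξ₂ t
    have h3 := hd t
    have hD := (((h1.pow 2).const_mul (1/2)).add
        (((h2.add (h1.const_mul k₁)).pow 2).const_mul (1/2))).add
        (((h3.pow 2)).const_mul (1/(2*γ)))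
    rw [hV]
    convert hD using 1
    · rfl
    · rfl
    · rfl
    push_cast
    simp only [Pi.add_apply]
    field_simp
    ring
  · intro hk1 hk2
    nlinarith [sq_nonneg (ξ₁ t), sq_nonneg (ξ₂ t + k₁ * ξ₁ t)]
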